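/- arXiv:1101.2471 — 3 statements merged into one kernel-verified Lean document; each statement's English description precedes it below -/
import Mathlib

section
/- Let (H, *, 0, μ_H) be a fuzzy hyper BCK-algebra. If for all x,y ∈ H, x ≪ y implies μ_H(x) ≤ μ_H(y), then μ_H(x) = μ_H(0) for all x ∈ H. -/
/-- A hyper BCK-algebra: a carrier `H` with a hyperoperation `m` taking nonempty
set values and a constant `zero`, satisfying (HK1), (HK2), (HK3), where `x ≪ y`
means `zero ∈ m x y` and `A ≪ B` means every `a ∈ A` has some `b ∈ B` with `a ≪ b`. -/
structure HyperBCK (H : Type*) where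
  m : H → H → Set H
  zero : H
  m_nonempty : ∀ x y, (m x y).Nonempty
  hk1 : ∀ x y z : H, ∀ a ∈ ⋃ s ∈ m x z, ⋃ t ∈ m y z, m s t, ∃ b ∈ m x y, zero ∈ m a b
  hk2 : ∀ x y z : H, (⋃ s ∈ m x y, m s z) = ⋃ s ∈ m x z, m s y
  hk3 : ∀ x : H, ∀ a ∈ ⋃ t : H, m x t, zero ∈ m a x

/-- A fuzzy hyper BCK-algebra: a hyper BCK-algebra together with `μ : H → [0,1]`
such that `inf (μ '' (x*y)) ≥ min (μ x) (μ y)` for all `x y`. -/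
structure FuzzyHyperBCK (H : Type*) extends HyperBCK H where
  μ : H → ℝ
  μ_mem : ∀ x, μ x ∈ Set.Icc (0:ℝ) 1
  fuzzy : ∀ x y, min (μ x) (μ y) ≤ sInf (μ '' m x y)

/-- Homomorphism of hyper BCK-algebras: preserves the constant and
`f '' (x*y) = (f x) * (f y)` elementwise. -/
def IsHom {H F : Type*} (A : HyperBCK H) (B : HyperBCK F) (f : H → F) : Prop :=
  f A.zero = B.zero ∧ ∀ x y, f '' A.m x y = B.m (f x) (f y)

/-- Homomorphism of fuzzy hyper BCK-algebras: a hyper BCK homomorphism with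
`μ_F (f x) ≥ μ_H x` for all `x`. -/
def IsFuzzyHom {H F : Type*} (A : FuzzyHyperBCK H) (B : FuzzyHyperBCK F) (f : H → F) : Prop :=
  IsHom A.toHyperBCK B.toHyperBCK f ∧ ∀ x, A.μ x ≤ B.μ (f x)

/-- Hyper BCK-subalgebra: contains `zero` and is closed under the hyperoperation. -/
def IsSubalgebra {H : Type*} (A : HyperBCK H) (S : Set H) : Prop :=
  A.zero ∈ S ∧ ∀ x ∈ S, ∀ y ∈ S, A.m x y ⊆ S

/-- If `x ≪ y → μ_H x ≤ μ_H y` for all `x y`, then `μ_H x = μ_H 0` for all `x`. -/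
theorem stmt1 {H : Type*} (A : FuzzyHyperBCK H)
    (h : ∀ x y : H, A.zero ∈ A.m x y → A.μ x ≤ A.μ y) :
    ∀ x : H, A.μ x = A.μ A.zero := by
  intro x
  -- basic facts
  have hbdd : ∀ u v : H, BddBelow (A.μ '' A.m u v) := by
    intro u v
    exact ⟨0, by rintro r ⟨a, _, rfl⟩; exact (A.μ_mem a).1⟩
  have hle : ∀ u v : H, ∀ a ∈ A.m u v, min (A.μ u) (A.μ v) ≤ A.μ a := by
    intro u v a ha
    exact le_trans (A.fuzzy u v) (csInf_le (hbdd u v) (Set.mem_image_of_mem _ ha))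
  -- pick a ∈ x*x
  obtain ⟨a, ha⟩ := A.m_nonempty x x
  have hμa : A.μ x ≤ A.μ a := by simpa using hle x x a ha
  -- pick b0 ∈ x*a, then 0 ∈ b0*x ⊆ (x*a)*x = (x*x)*a, so ∃ s ∈ x*x, 0 ∈ s*a
  obtain ⟨b0, hb0⟩ := A.m_nonempty x a
  have hb0x : A.zero ∈ A.m b0 x :=
    A.hk3 x b0 (Set.mem_iUnion.2 ⟨a, hb0⟩)
  have hmem : A.zero ∈ ⋃ s ∈ A.m x a, A.m s x :=
    Set.mem_iUnion₂.2 ⟨b0, hb0, hb0x⟩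
  rw [A.hk2 x a x] at hmem
  obtain ⟨s, hs, hsa⟩ := Set.mem_iUnion₂.1 hmem
  have hμs : A.μ x ≤ A.μ s := by simpa using hle x x s hs
  -- μ x ≤ μ 0 : since 0 ∈ s*a with s,a ∈ x*x
  have h1 : A.μ x ≤ A.μ A.zero := by
    have := le_trans (A.fuzzy s a) (csInf_le (hbdd s a) (Set.mem_image_of_mem _ hsa))
    have hmin : A.μ x ≤ min (A.μ s) (A.μ a) := le_min hμs hμa
    linarith
  -- μ 0 ≤ μ x : 0 ∈ (x*x)*(x*x), apply HK1
  have h0mem : A.zero ∈ ⋃ u ∈ A.m x x, ⋃ t ∈ A.m x x, A.m u t :=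
    Set.mem_iUnion₂.2 ⟨s, hs, Set.mem_iUnion₂.2 ⟨a, ha, hsa⟩⟩
  obtain ⟨b, hb, h0b⟩ := A.hk1 x x x A.zero h0mem
  have hμ0b : A.μ A.zero ≤ A.μ b := h A.zero b h0b
  have hbx : A.zero ∈ A.m b x := A.hk3 x b (Set.mem_iUnion.2 ⟨x, hb⟩)
  have hμbx : A.μ b ≤ A.μ x := h b x hbx
  linarith
end

section
/- Let K be a hyper BCK-algebra, let (H, μ_H) be a fuzzy hyper BCK-algebra, and let h, g : K → H be homomorphisms of hyper BCK-algebras. Define μ_K : K → [0,1] by μ_K(x) = min(μ_H(h(x)), μ_H(g(x))). Then (K, μ_K) is a fuzzy hyper BCK-algebra, and h and g are homomorphisms of fuzzy hyper BCK-algebras from (K, μ_K) to (H, μ_H). -/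
/-- Given hyper BCK homomorphisms `h, g : K → H` into a fuzzy hyper
BCK-algebra `(H, μ_H)`, the map `μ_K x = min (μ_H (h x)) (μ_H (g x))` makes `K` a
fuzzy hyper BCK-algebra, and `h`, `g` are fuzzy hyper BCK homomorphisms for it. -/
theorem stmt13 {Kt Ht : Type*} (K : HyperBCK Kt) (A : FuzzyHyperBCK Ht)
    (h g : Kt → Ht) (hh : IsHom K A.toHyperBCK h) (hg : IsHom K A.toHyperBCK g) :
    ∃ C : FuzzyHyperBCK Kt, C.toHyperBCK = K ∧
      (∀ x, C.μ x = min (A.μ (h x)) (A.μ (g x))) ∧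
      IsFuzzyHom C A h ∧ IsFuzzyHom C A g := by
  set μK : Kt → ℝ := fun x => min (A.μ (h x)) (A.μ (g x)) with hμK
  have key : ∀ (f : Kt → Ht), IsHom K A.toHyperBCK f →
      ∀ x y : Kt, ∀ a ∈ K.m x y, min (A.μ (f x)) (A.μ (f y)) ≤ A.μ (f a) := by
    intro f hf x y a ha
    have hmem : f a ∈ A.m (f x) (f y) := by
      rw [← (hf.2 x y)]; exact Set.mem_image_of_mem f ha
    have hbdd : BddBelow (A.μ '' A.m (f x) (f y)) := by
      refine ⟨0, ?_⟩
      rintro r ⟨t, _, rfl⟩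
      exact (A.μ_mem t).1
    calc min (A.μ (f x)) (A.μ (f y)) ≤ sInf (A.μ '' A.m (f x) (f y)) := A.fuzzy _ _
      _ ≤ A.μ (f a) := csInf_le hbdd (Set.mem_image_of_mem _ hmem)
  refine ⟨⟨K, μK, fun x => ⟨le_min (A.μ_mem (h x)).1 (A.μ_mem (g x)).1,
      min_le_of_left_le (A.μ_mem (h x)).2⟩, ?_⟩, rfl, fun x => rfl,
    ⟨hh, fun x => min_le_left _ _⟩, ⟨hg, fun x => min_le_right _ _⟩⟩
  intro x y
  have hne : (μK '' K.m x y).Nonempty := (K.m_nonempty x y).image _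
  refine le_csInf hne ?_
  rintro r ⟨a, ha, rfl⟩
  have h1 := key h hh x y a ha
  have h2 := key g hg x y a ha
  exact le_min (le_trans (min_le_min (min_le_left _ _) (min_le_left _ _)) h1)
    (le_trans (min_le_min (min_le_right _ _) (min_le_right _ _)) h2)
end

section
/- Let (H_i, μ_{H_i})_{i ∈ I} be a family of fuzzy hyper BCK-algebras. On the product H = ∏_{i ∈ I} H_i, equipped with the componentwise hyperoperation x*y = {z ∈ H : z(i) ∈ x(i) *_i y(i) for all i ∈ I} and constant 0 = (i ↦ 0_i), define μ_H : H → [0,1] by μ_H(x) = inf_{i ∈ I} μ_{H_i}(x(i)). Then (H, μ_H) is a fuzzy hyper BCK-algebra, i.e. inf(μ_H(x*y)) ≥ min(μ_H(x), μ_H(y)) for all x, y ∈ H. -/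
universe u v

/-- The product of a family of fuzzy hyper BCK-algebras, with the
componentwise hyperoperation, constant `i ↦ 0_i`, and `μ_H x = ⨅ i, μ_{H_i} (x i)`,
is a fuzzy hyper BCK-algebra. -/
theorem stmt14 {I : Type u} {Hs : I → Type v} (As : ∀ i, FuzzyHyperBCK (Hs i)) :
    ∃ P : FuzzyHyperBCK (∀ i, Hs i),
      P.zero = (fun i => (As i).zero) ∧
      (∀ x y, P.m x y = {z : ∀ i, Hs i | ∀ i, z i ∈ (As i).m (x i) (y i)}) ∧
      (∀ x, P.μ x = ⨅ i, (As i).μ (x i)) := by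
  classical
  set m : (∀ i, Hs i) → (∀ i, Hs i) → Set (∀ i, Hs i) :=
    fun x y => {z : ∀ i, Hs i | ∀ i, z i ∈ (As i).m (x i) (y i)} with hm
  have hne : ∀ x y, (m x y).Nonempty := by
    intro x y
    choose f hf using fun i => (As i).m_nonempty (x i) (y i)
    exact ⟨f, hf⟩
  have hμ0 : ∀ i (a : Hs i), (0:ℝ) ≤ (As i).μ a := fun i a => ((As i).μ_mem a).1
  have hbdd : ∀ x : ∀ i, Hs i, BddBelow (Set.range fun i => (As i).μ (x i)) := by
    intro x
    exact ⟨0, by rintro _ ⟨i, rfl⟩; exact hμ0 i _⟩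
  refine ⟨{
    m := m
    zero := fun i => (As i).zero
    m_nonempty := hne
    hk1 := ?_
    hk2 := ?_
    hk3 := ?_
    μ := fun x => ⨅ i, (As i).μ (x i)
    μ_mem := ?_
    fuzzy := ?_ }, rfl, fun _ _ => rfl, fun _ => rfl⟩
  · intro x y z a ha
    simp only [Set.mem_iUnion] at ha
    obtain ⟨s, hs, t, ht, hst⟩ := ha
    have key : ∀ i, ∃ b ∈ (As i).m (x i) (y i), (As i).zero ∈ (As i).m (a i) b := by
      intro i
      refine (As i).hk1 (x i) (y i) (z i) (a i) ?_
      simp only [Set.mem_iUnion]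
      exact ⟨s i, hs i, t i, ht i, hst i⟩
    choose b hb hb0 using key
    exact ⟨b, hb, hb0⟩
  · intro x y z
    ext a
    simp only [Set.mem_iUnion]
    constructor
    · rintro ⟨s, hs, ha⟩
      have key : ∀ i, ∃ c ∈ (As i).m (x i) (z i), a i ∈ (As i).m c (y i) := by
        intro i
        have : a i ∈ ⋃ s' ∈ (As i).m (x i) (z i), (As i).m s' (y i) := by
          rw [← (As i).hk2]
          simp only [Set.mem_iUnion]
          exact ⟨s i, hs i, ha i⟩
        simpa only [Set.mem_iUnion, exists_prop] using this
      choose c hc hac using key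
      exact ⟨c, hc, hac⟩
    · rintro ⟨s, hs, ha⟩
      have key : ∀ i, ∃ c ∈ (As i).m (x i) (y i), a i ∈ (As i).m c (z i) := by
        intro i
        have : a i ∈ ⋃ s' ∈ (As i).m (x i) (y i), (As i).m s' (z i) := by
          rw [(As i).hk2]
          simp only [Set.mem_iUnion]
          exact ⟨s i, hs i, ha i⟩
        simpa only [Set.mem_iUnion, exists_prop] using this
      choose c hc hac using key
      exact ⟨c, hc, hac⟩
  · intro x a ha
    simp only [Set.mem_iUnion] at ha
    obtain ⟨t, ht⟩ := ha
    intro i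
    exact (As i).hk3 (x i) (a i) (Set.mem_iUnion.2 ⟨t i, ht i⟩)
  · intro x
    constructor
    · exact Real.iInf_nonneg fun i => hμ0 i _
    · rcases isEmpty_or_nonempty I with h | h
      · haveI := h
        show (⨅ i, (As i).μ (x i)) ≤ 1
        rw [Real.iInf_of_isEmpty]
        norm_num
      · haveI := h
        obtain ⟨i⟩ := h
        exact ciInf_le_of_le (hbdd x) i ((As i).μ_mem (x i)).2
  · intro x y
    refine le_csInf ((hne x y).image _) ?_
    rintro _ ⟨z, hz, rfl⟩
    rcases isEmpty_or_nonempty I with hI | hI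
    · haveI := hI
      show _ ≤ (⨅ i, (As i).μ (z i))
      simp [Real.iInf_of_isEmpty]
    · haveI := hI
      refine le_ciInf fun i => ?_
      have h1 : min (⨅ j, (As j).μ (x j)) (⨅ j, (As j).μ (y j)) ≤
          min ((As i).μ (x i)) ((As i).μ (y i)) :=
        min_le_min (ciInf_le (hbdd x) i) (ciInf_le (hbdd y) i)
      have h2 : sInf ((As i).μ '' (As i).m (x i) (y i)) ≤ (As i).μ (z i) :=
        csInf_le ⟨0, by rintro _ ⟨w, _, rfl⟩; exact hμ0 i w⟩ ⟨z i, hz i, rfl⟩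
      exact h1.trans (((As i).fuzzy (x i) (y i)).trans h2)
end
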